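/- (Thinning coupling preserves distribution) Let X, Y be discrete point processes on {1,…,N} (identified with random vectors in {0,1}^N) such that whenever ℙ(Z_{1:k−1} = z_{1:k−1}, X_{1:k−1} = x_{1:k−1}) > 0 one has ℙ(Y_k = 1 | Y_{1:k−1} = z_{1:k−1}) ≤ ℙ(X_k = 1 | X_{1:k−1} = x_{1:k−1}), and let (X, Z) be the coupling defined sequentially by ℙ(X_k = 1 | Z_{1:k−1}, X_{1:k−1} = x_{1:k−1}) = ℙ(X_k = 1 | X_{1:k−1} = x_{1:k−1}) and ℙ(Z_k = 1 | Z_{1:k−1} = z_{1:k−1}, X_{1:k} = x_{1:k}) = 1_{x_k = 1} · ℙ(Y_k = 1 | Y_{1:k−1} = z_{1:k−1}) / ℙ(X_k = 1 | X_{1:k−1} = x_{1:k−1}). Then Z ⊆ X almost surely and Z has the same distribution as Y. -/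

import Mathlib

/-- `ℙ(W_{1:k} = x_{1:k})`: probability that a point process with distribution `P`
(identified with a `{0,1}^N`-valued vector) agrees with `x` on the first `k` coordinates. -/
noncomputable def prefProb {N : ℕ} (P : (Fin N → Bool) → ℝ) (k : ℕ) (x : Fin N → Bool) : ℝ :=
  ∑ w : Fin N → Bool, if ∀ i : Fin N, (i : ℕ) < k → w i = x i then P w else 0

/-- `ℙ(W_k = 1 | W_{1:k−1} = x_{1:k−1})` for a point process with distribution `P`. -/
noncomputable def condProb {N : ℕ} (P : (Fin N → Bool) → ℝ) (k : Fin N) (x : Fin N → Bool) : ℝ :=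
  (∑ w : Fin N → Bool,
      if (∀ i : Fin N, (i : ℕ) < (k : ℕ) → w i = x i) ∧ w k = true then P w else 0) /
    prefProb P (k : ℕ) x

/-- `ℙ(X_{1:kX} = x_{1:kX}, Z_{1:kZ} = z_{1:kZ})` under a coupling `μ` of `(X, Z)`. -/
noncomputable def prefProb2 {N : ℕ} (μ : ((Fin N → Bool) × (Fin N → Bool)) → ℝ)
    (kX kZ : ℕ) (x z : Fin N → Bool) : ℝ :=
  ∑ p : (Fin N → Bool) × (Fin N → Bool),
    if (∀ i : Fin N, (i : ℕ) < kX → p.1 i = x i) ∧ (∀ i : Fin N, (i : ℕ) < kZ → p.2 i = z i)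
      then μ p else 0

/-- `ℙ(X_k = 1 | Z_{1:k−1} = z_{1:k−1}, X_{1:k−1} = x_{1:k−1})` under the coupling `μ`. -/
noncomputable def condProbX {N : ℕ} (μ : ((Fin N → Bool) × (Fin N → Bool)) → ℝ)
    (k : Fin N) (x z : Fin N → Bool) : ℝ :=
  (∑ p : (Fin N → Bool) × (Fin N → Bool),
      if (∀ i : Fin N, (i : ℕ) < (k : ℕ) → p.1 i = x i) ∧ p.1 k = true ∧
          (∀ i : Fin N, (i : ℕ) < (k : ℕ) → p.2 i = z i)
        then μ p else 0) /
    prefProb2 μ (k : ℕ) (k : ℕ) x z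

/-- `ℙ(Z_k = 1 | Z_{1:k−1} = z_{1:k−1}, X_{1:k} = x_{1:k})` under the coupling `μ`. -/
noncomputable def condProbZ {N : ℕ} (μ : ((Fin N → Bool) × (Fin N → Bool)) → ℝ)
    (k : Fin N) (x z : Fin N → Bool) : ℝ :=
  (∑ p : (Fin N → Bool) × (Fin N → Bool),
      if (∀ i : Fin N, (i : ℕ) < (k : ℕ) + 1 → p.1 i = x i) ∧
          (∀ i : Fin N, (i : ℕ) < (k : ℕ) → p.2 i = z i) ∧ p.2 k = true
        then μ p else 0) /
    prefProb2 μ ((k : ℕ) + 1) (k : ℕ) x z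

section Helpers
variable {N : ℕ}

lemma prefix_succ_iff (k : Fin N) (x w : Fin N → Bool) (b : Bool) :
    (∀ i : Fin N, (i : ℕ) < (k : ℕ) + 1 → w i = Function.update x k b i) ↔
      (∀ i : Fin N, (i : ℕ) < (k : ℕ) → w i = x i) ∧ w k = b := by
  constructor
  · intro h
    refine ⟨fun i hi => ?_, ?_⟩
    · have := h i (by omega)
      rwa [Function.update_of_ne (Fin.ne_of_val_ne (by omega))] at this
    · have := h k (by omega)
      rwa [Function.update_self] at this
  · rintro ⟨h1, h2⟩ i hi
    rcases Nat.lt_succ_iff_lt_or_eq.mp hi with hi | hi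
    · rw [Function.update_of_ne (Fin.ne_of_val_ne (by omega))]
      exact h1 i hi
    · have : i = k := Fin.ext hi
      subst this
      rwa [Function.update_self]

lemma prefix_lt_update (k : Fin N) (x w : Fin N → Bool) (b : Bool) :
    (∀ i : Fin N, (i : ℕ) < (k : ℕ) → w i = Function.update x k b i) ↔
      (∀ i : Fin N, (i : ℕ) < (k : ℕ) → w i = x i) := by
  constructor <;> intro h i hi <;> have := h i hi
  · rwa [Function.update_of_ne (Fin.ne_of_val_ne (by omega))] at this
  · rwa [Function.update_of_ne (Fin.ne_of_val_ne (by omega))]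

lemma prefProb_nonneg (P : (Fin N → Bool) → ℝ) (hP : ∀ x, 0 ≤ P x) (k : ℕ) (x : Fin N → Bool) :
    0 ≤ prefProb P k x :=
  Finset.sum_nonneg fun w _ => by split <;> simp [hP w]

lemma if_bool_split (A : Prop) [Decidable A] (c : Bool) (v : ℝ) :
    (if A then v else 0) = (if A ∧ c = true then v else 0) + (if A ∧ c = false then v else 0) := by
  cases c <;> by_cases h : A <;> simp [h]

lemma prefProb_split (P : (Fin N → Bool) → ℝ) (k : Fin N) (z : Fin N → Bool) :
    prefProb P (k : ℕ) z =
      prefProb P ((k : ℕ) + 1) (Function.update z k true) +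
        prefProb P ((k : ℕ) + 1) (Function.update z k false) := by
  unfold prefProb
  rw [← Finset.sum_add_distrib]
  refine Finset.sum_congr rfl fun w _ => ?_
  rw [if_congr (prefix_succ_iff k z w true) rfl rfl, if_congr (prefix_succ_iff k z w false) rfl rfl]
  exact if_bool_split _ (w k) (P w)

lemma condProb_num (P : (Fin N → Bool) → ℝ) (k : Fin N) (x : Fin N → Bool) :
    (∑ w : Fin N → Bool,
        if (∀ i : Fin N, (i : ℕ) < (k : ℕ) → w i = x i) ∧ w k = true then P w else 0) =
      prefProb P ((k : ℕ) + 1) (Function.update x k true) :=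
  Finset.sum_congr rfl fun w _ => if_congr (prefix_succ_iff k x w true).symm rfl rfl

lemma condProb_nonneg (P : (Fin N → Bool) → ℝ) (hP : ∀ x, 0 ≤ P x) (k : Fin N)
    (x : Fin N → Bool) : 0 ≤ condProb P k x := by
  apply div_nonneg _ (prefProb_nonneg P hP _ _)
  exact Finset.sum_nonneg fun w _ => by split <;> simp [hP w]

lemma prefProb_succ_true (P : (Fin N → Bool) → ℝ) (hP : ∀ x, 0 ≤ P x) (k : Fin N)
    (x : Fin N → Bool) :
    prefProb P ((k : ℕ) + 1) (Function.update x k true) =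
      prefProb P (k : ℕ) x * condProb P k x := by
  rw [condProb, condProb_num]
  by_cases hD : prefProb P (k : ℕ) x = 0
  · have hsplit := prefProb_split P k x
    have h1 := prefProb_nonneg P hP ((k : ℕ) + 1) (Function.update x k true)
    have h2 := prefProb_nonneg P hP ((k : ℕ) + 1) (Function.update x k false)
    rw [hD]
    linarith
  · rw [mul_comm, div_mul_cancel₀ _ hD]

lemma prefProb_succ (P : (Fin N → Bool) → ℝ) (hP : ∀ x, 0 ≤ P x) (k : Fin N)
    (x : Fin N → Bool) (b : Bool) :
    prefProb P ((k : ℕ) + 1) (Function.update x k b) =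
      prefProb P (k : ℕ) x * (if b = true then condProb P k x else 1 - condProb P k x) := by
  cases b
  · have hsplit := prefProb_split P k x
    have ht := prefProb_succ_true P hP k x
    simp only [if_neg (by simp : ¬(false = true))]
    linarith [ht]
  · simpa using prefProb_succ_true P hP k x

lemma prefProb_succ_self (P : (Fin N → Bool) → ℝ) (hP : ∀ x, 0 ≤ P x) (k : Fin N)
    (x : Fin N → Bool) :
    prefProb P ((k : ℕ) + 1) x =
      prefProb P (k : ℕ) x * (if x k = true then condProb P k x else 1 - condProb P k x) := by
  have := prefProb_succ P hP k x (x k)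
  rwa [Function.update_eq_self] at this

lemma condProb_update (P : (Fin N → Bool) → ℝ) (k : Fin N) (x : Fin N → Bool) (b : Bool) :
    condProb P k (Function.update x k b) = condProb P k x := by
  unfold condProb prefProb
  congr 1
  · exact Finset.sum_congr rfl fun w _ =>
      if_congr (and_congr_left' (prefix_lt_update k x w b)) rfl rfl
  · exact Finset.sum_congr rfl fun w _ => if_congr (prefix_lt_update k x w b) rfl rfl

end Helpers

section Helpers2
variable {N : ℕ} (μ : ((Fin N → Bool) × (Fin N → Bool)) → ℝ)

lemma prefProb2_nonneg (hμnn : ∀ p, 0 ≤ μ p) (kX kZ : ℕ) (x z : Fin N → Bool) :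
    0 ≤ prefProb2 μ kX kZ x z :=
  Finset.sum_nonneg fun p _ => by split <;> simp [hμnn p]

lemma prefProb2_splitX (k : Fin N) (kZ : ℕ) (x z : Fin N → Bool) :
    prefProb2 μ (k : ℕ) kZ x z =
      prefProb2 μ ((k : ℕ) + 1) kZ (Function.update x k true) z +
        prefProb2 μ ((k : ℕ) + 1) kZ (Function.update x k false) z := by
  unfold prefProb2
  rw [← Finset.sum_add_distrib]
  refine Finset.sum_congr rfl fun p _ => ?_
  rw [if_congr (and_congr_left' (prefix_succ_iff k x p.1 true)) rfl rfl,
    if_congr (and_congr_left' (prefix_succ_iff k x p.1 false)) rfl rfl]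
  rw [if_bool_split ((∀ i : Fin N, (i : ℕ) < (k : ℕ) → p.1 i = x i) ∧
      (∀ i : Fin N, (i : ℕ) < kZ → p.2 i = z i)) (p.1 k) (μ p)]
  congr 1 <;> exact if_congr (by tauto) rfl rfl

lemma prefProb2_splitZ (kX : ℕ) (k : Fin N) (x z : Fin N → Bool) :
    prefProb2 μ kX (k : ℕ) x z =
      prefProb2 μ kX ((k : ℕ) + 1) x (Function.update z k true) +
        prefProb2 μ kX ((k : ℕ) + 1) x (Function.update z k false) := by
  unfold prefProb2
  rw [← Finset.sum_add_distrib]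
  refine Finset.sum_congr rfl fun p _ => ?_
  rw [if_congr (and_congr_right' (prefix_succ_iff k z p.2 true)) rfl rfl,
    if_congr (and_congr_right' (prefix_succ_iff k z p.2 false)) rfl rfl]
  rw [if_bool_split ((∀ i : Fin N, (i : ℕ) < kX → p.1 i = x i) ∧
      (∀ i : Fin N, (i : ℕ) < (k : ℕ) → p.2 i = z i)) (p.2 k) (μ p)]
  congr 1 <;> exact if_congr (by tauto) rfl rfl

lemma condProbX_num (k : Fin N) (x z : Fin N → Bool) :
    (∑ p : (Fin N → Bool) × (Fin N → Bool),
        if (∀ i : Fin N, (i : ℕ) < (k : ℕ) → p.1 i = x i) ∧ p.1 k = true ∧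
            (∀ i : Fin N, (i : ℕ) < (k : ℕ) → p.2 i = z i)
          then μ p else 0) =
      prefProb2 μ ((k : ℕ) + 1) (k : ℕ) (Function.update x k true) z := by
  refine Finset.sum_congr rfl fun p _ => if_congr ?_ rfl rfl
  rw [prefix_succ_iff k x p.1 true]
  tauto

lemma condProbZ_num (k : Fin N) (x z : Fin N → Bool) :
    (∑ p : (Fin N → Bool) × (Fin N → Bool),
        if (∀ i : Fin N, (i : ℕ) < (k : ℕ) + 1 → p.1 i = x i) ∧
            (∀ i : Fin N, (i : ℕ) < (k : ℕ) → p.2 i = z i) ∧ p.2 k = true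
          then μ p else 0) =
      prefProb2 μ ((k : ℕ) + 1) ((k : ℕ) + 1) x (Function.update z k true) := by
  refine Finset.sum_congr rfl fun p _ => if_congr ?_ rfl rfl
  rw [prefix_succ_iff k z p.2 true]

end Helpers2

section Coupling
variable {N : ℕ} (PX PY : (Fin N → Bool) → ℝ) (μ : ((Fin N → Bool) × (Fin N → Bool)) → ℝ)

lemma L_condX (hX : ∀ (k : Fin N) (x z : Fin N → Bool),
      0 < prefProb2 μ (k : ℕ) (k : ℕ) x z → condProbX μ k x z = condProb PX k x)
    (k : Fin N) (x z : Fin N → Bool) (hA : 0 < prefProb2 μ (k : ℕ) (k : ℕ) x z) :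
    prefProb2 μ ((k : ℕ) + 1) (k : ℕ) (Function.update x k true) z =
      prefProb2 μ (k : ℕ) (k : ℕ) x z * condProb PX k x := by
  have h := hX k x z hA
  rw [condProbX, condProbX_num, div_eq_iff hA.ne'] at h
  rw [h]; ring

lemma L_condZ (hZ : ∀ (k : Fin N) (x z : Fin N → Bool),
      0 < prefProb2 μ ((k : ℕ) + 1) (k : ℕ) x z →
        condProbZ μ k x z =
          if x k = true then condProb PY k z / condProb PX k x else 0)
    (k : Fin N) (x z : Fin N → Bool) (hB : 0 < prefProb2 μ ((k : ℕ) + 1) (k : ℕ) x z) :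
    prefProb2 μ ((k : ℕ) + 1) ((k : ℕ) + 1) x (Function.update z k true) =
      prefProb2 μ ((k : ℕ) + 1) (k : ℕ) x z *
        (if x k = true then condProb PY k z / condProb PX k x else 0) := by
  have h := hZ k x z hB
  rw [condProbZ, condProbZ_num, div_eq_iff hB.ne'] at h
  rw [h]; ring

end Coupling

section Key
variable {N : ℕ} {PX PY : (Fin N → Bool) → ℝ} {μ : ((Fin N → Bool) × (Fin N → Bool)) → ℝ}
variable (hPXnn : ∀ x, 0 ≤ PX x) (hPYnn : ∀ y, 0 ≤ PY y) (hμnn : ∀ p, 0 ≤ μ p)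
variable (hdom : ∀ (k : Fin N) (x z : Fin N → Bool),
      0 < prefProb2 μ (k : ℕ) (k : ℕ) x z → condProb PY k z ≤ condProb PX k x)
variable (hX : ∀ (k : Fin N) (x z : Fin N → Bool),
      0 < prefProb2 μ (k : ℕ) (k : ℕ) x z → condProbX μ k x z = condProb PX k x)
variable (hZ : ∀ (k : Fin N) (x z : Fin N → Bool),
      0 < prefProb2 μ ((k : ℕ) + 1) (k : ℕ) x z →
        condProbZ μ k x z =
          if x k = true then condProb PY k z / condProb PX k x else 0)

include hPXnn hPYnn hμnn hdom hX hZ in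
lemma keyR1 (k : Fin N) (x z : Fin N → Bool) :
    prefProb2 μ ((k : ℕ) + 1) ((k : ℕ) + 1) (Function.update x k true) (Function.update z k true) +
      prefProb2 μ ((k : ℕ) + 1) ((k : ℕ) + 1) (Function.update x k false) (Function.update z k true) =
      prefProb2 μ (k : ℕ) (k : ℕ) x z * condProb PY k z := by
  set A := prefProb2 μ (k : ℕ) (k : ℕ) x z with hAdef
  have hsplitX := prefProb2_splitX μ k (k : ℕ) x z
  have hsplitZ1 := prefProb2_splitZ μ ((k : ℕ) + 1) k (Function.update x k true) z
  have hsplitZ0 := prefProb2_splitZ μ ((k : ℕ) + 1) k (Function.update x k false) z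
  have hB1nn := prefProb2_nonneg μ hμnn ((k : ℕ) + 1) (k : ℕ) (Function.update x k true) z
  have hB0nn := prefProb2_nonneg μ hμnn ((k : ℕ) + 1) (k : ℕ) (Function.update x k false) z
  have hT1nn := prefProb2_nonneg μ hμnn ((k : ℕ) + 1) ((k : ℕ) + 1) (Function.update x k true)
    (Function.update z k true)
  have hT0nn := prefProb2_nonneg μ hμnn ((k : ℕ) + 1) ((k : ℕ) + 1) (Function.update x k false)
    (Function.update z k true)
  have hF1nn := prefProb2_nonneg μ hμnn ((k : ℕ) + 1) ((k : ℕ) + 1) (Function.update x k true)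
    (Function.update z k false)
  have hF0nn := prefProb2_nonneg μ hμnn ((k : ℕ) + 1) ((k : ℕ) + 1) (Function.update x k false)
    (Function.update z k false)
  by_cases hA : 0 < A
  · -- positive case
    have hB1 := L_condX PX μ hX k x z hA
    have hd := hdom k x z hA
    have hpY0 : 0 ≤ condProb PY k z := condProb_nonneg PY hPYnn k z
    -- term for x_k = false is zero
    have hterm0 : prefProb2 μ ((k : ℕ) + 1) ((k : ℕ) + 1) (Function.update x k false)
        (Function.update z k true) = 0 := by
      by_cases hB0 : 0 < prefProb2 μ ((k : ℕ) + 1) (k : ℕ) (Function.update x k false) z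
      · have h := L_condZ PX PY μ hZ k (Function.update x k false) z hB0
        simpa [Function.update_self] using h
      · have hB0' : prefProb2 μ ((k : ℕ) + 1) (k : ℕ) (Function.update x k false) z = 0 :=
          le_antisymm (not_lt.1 hB0) hB0nn
        linarith
    rw [hterm0, add_zero]
    by_cases hB1p : 0 < prefProb2 μ ((k : ℕ) + 1) (k : ℕ) (Function.update x k true) z
    · have h := L_condZ PX PY μ hZ k (Function.update x k true) z hB1p
      rw [Function.update_self, if_pos rfl, condProb_update PX k x true] at h
      have hpX : 0 < condProb PX k x := by
        rw [hB1] at hB1p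
        nlinarith [condProb_nonneg PX hPXnn k x]
      rw [h, hB1]
      field_simp
      rw [← hAdef]
      ring
    · have hB1' : prefProb2 μ ((k : ℕ) + 1) (k : ℕ) (Function.update x k true) z = 0 :=
        le_antisymm (not_lt.1 hB1p) hB1nn
      have hpX : condProb PX k x = 0 := by
        rw [hB1'] at hB1
        rcases mul_eq_zero.1 hB1.symm with h | h
        · exact absurd h hA.ne'
        · exact h
      have hpY : condProb PY k z = 0 := le_antisymm (by rw [← hpX]; exact hd) hpY0
      rw [hpY, mul_zero]
      linarith
  · have hAnn := prefProb2_nonneg μ hμnn (k : ℕ) (k : ℕ) x z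
    have hA0 : A = 0 := le_antisymm (not_lt.1 hA) hAnn
    rw [hA0, zero_mul]
    linarith

include hPXnn hPYnn hμnn hdom hX hZ in
lemma keyR (k : Fin N) (x z : Fin N → Bool) :
    prefProb2 μ ((k : ℕ) + 1) ((k : ℕ) + 1) (Function.update x k true) z +
      prefProb2 μ ((k : ℕ) + 1) ((k : ℕ) + 1) (Function.update x k false) z =
      prefProb2 μ (k : ℕ) (k : ℕ) x z *
        (if z k = true then condProb PY k z else 1 - condProb PY k z) := by
  have hR1 := keyR1 hPXnn hPYnn hμnn hdom hX hZ k x z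
  cases hzk : z k
  · have hz : Function.update z k false = z := by rw [← hzk, Function.update_eq_self]
    have hsplitX := prefProb2_splitX μ k (k : ℕ) x z
    have hsplitZ1 := prefProb2_splitZ μ ((k : ℕ) + 1) k (Function.update x k true) z
    have hsplitZ0 := prefProb2_splitZ μ ((k : ℕ) + 1) k (Function.update x k false) z
    rw [hz] at hsplitZ1 hsplitZ0
    rw [if_neg (by simp : ¬(false = true))]
    linarith
  · have hz : Function.update z k true = z := by rw [← hzk, Function.update_eq_self]
    rw [hz] at hR1
    rw [if_pos rfl]
    linarith

end Key

section Doubling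
variable {N : ℕ}

lemma sum_update_eq (h : (Fin N → Bool) → ℝ) (k : Fin N) (b : Bool) :
    ∑ x : Fin N → Bool, h (Function.update x k b) =
      2 * ∑ x : Fin N → Bool, if x k = b then h x else 0 := by
  rw [two_mul,
    ← Finset.sum_filter_add_sum_filter_not Finset.univ (fun x => x k = b)
      (fun x => h (Function.update x k b))]
  have e1 : ∑ x ∈ Finset.univ.filter (fun x : Fin N → Bool => x k = b),
      h (Function.update x k b) = ∑ x : Fin N → Bool, if x k = b then h x else 0 := by
    rw [Finset.sum_filter]
    refine Finset.sum_congr rfl fun x _ => ?_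
    by_cases hx : x k = b
    · rw [if_pos hx, if_pos hx, ← hx, Function.update_eq_self]
    · rw [if_neg hx, if_neg hx]
  have e2 : ∑ x ∈ Finset.univ.filter (fun x : Fin N → Bool => ¬ x k = b),
      h (Function.update x k b) = ∑ x : Fin N → Bool, if x k = b then h x else 0 := by
    rw [← Finset.sum_filter]
    refine Finset.sum_nbij' (i := fun x => Function.update x k b)
      (j := fun x => Function.update x k (!b)) ?_ ?_ ?_ ?_ ?_
    · intro a ha
      simp [Function.update_self]
    · intro a ha
      simp only [Finset.mem_filter, Finset.mem_univ, true_and] at ha ⊢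
      rw [Function.update_self]
      cases b <;> simp
    · intro a ha
      simp only [Finset.mem_filter, Finset.mem_univ, true_and] at ha
      have ha' : a k = !b := by cases b <;> simp_all
      funext i
      by_cases hik : i = k
      · subst hik; simp [ha']
      · simp [Function.update_of_ne hik]
    · intro a ha
      simp only [Finset.mem_filter, Finset.mem_univ, true_and] at ha
      funext i
      by_cases hik : i = k
      · subst hik; simp [ha]
      · simp [Function.update_of_ne hik]
    · intro a ha
      rfl

  rw [e1, e2]

lemma sum_pair (h : (Fin N → Bool) → ℝ) (k : Fin N) :
    ∑ x : Fin N → Bool, (h (Function.update x k true) + h (Function.update x k false)) =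
      2 * ∑ x : Fin N → Bool, h x := by
  rw [Finset.sum_add_distrib, sum_update_eq h k true, sum_update_eq h k false, ← mul_add,
    ← Finset.sum_add_distrib]
  congr 1
  refine Finset.sum_congr rfl fun x _ => ?_
  cases hx : x k <;> simp [hx]

lemma prefProb_top (P : (Fin N → Bool) → ℝ) (z : Fin N → Bool) : prefProb P N z = P z := by
  unfold prefProb
  have hiff : ∀ w : Fin N → Bool, (∀ i : Fin N, (i : ℕ) < N → w i = z i) ↔ w = z := by
    intro w
    constructor
    · intro h; funext i; exact h i i.isLt
    · rintro rfl i _; rfl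
  rw [Finset.sum_congr rfl fun w _ => if_congr (hiff w) rfl rfl]
  simp

lemma prefProb2_top (μ : ((Fin N → Bool) × (Fin N → Bool)) → ℝ) (x z : Fin N → Bool) :
    prefProb2 μ N N x z = μ (x, z) := by
  unfold prefProb2
  have hiff : ∀ p : (Fin N → Bool) × (Fin N → Bool),
      ((∀ i : Fin N, (i : ℕ) < N → p.1 i = x i) ∧ (∀ i : Fin N, (i : ℕ) < N → p.2 i = z i)) ↔
        p = (x, z) := by
    intro p
    constructor
    · rintro ⟨h1, h2⟩
      exact Prod.ext (funext fun i => h1 i i.isLt) (funext fun i => h2 i i.isLt)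
    · rintro rfl
      exact ⟨fun i _ => rfl, fun i _ => rfl⟩
  rw [Finset.sum_congr rfl fun p _ => if_congr (hiff p) rfl rfl]
  simp

end Doubling

section Main
variable {N : ℕ} {PX PY : (Fin N → Bool) → ℝ} {μ : ((Fin N → Bool) × (Fin N → Bool)) → ℝ}
variable (hPXnn : ∀ x, 0 ≤ PX x) (hPYnn : ∀ y, 0 ≤ PY y) (hμnn : ∀ p, 0 ≤ μ p)
variable (hPYsum : ∑ y, PY y = 1) (hμsum : ∑ p, μ p = 1)
variable (hdom : ∀ (k : Fin N) (x z : Fin N → Bool),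
      0 < prefProb2 μ (k : ℕ) (k : ℕ) x z → condProb PY k z ≤ condProb PX k x)
variable (hX : ∀ (k : Fin N) (x z : Fin N → Bool),
      0 < prefProb2 μ (k : ℕ) (k : ℕ) x z → condProbX μ k x z = condProb PX k x)
variable (hZ : ∀ (k : Fin N) (x z : Fin N → Bool),
      0 < prefProb2 μ ((k : ℕ) + 1) (k : ℕ) x z →
        condProbZ μ k x z =
          if x k = true then condProb PY k z / condProb PX k x else 0)

include hPXnn hPYnn hμnn hPYsum hμsum hdom hX hZ in
lemma marginal : ∀ k : ℕ, k ≤ N → ∀ z : Fin N → Bool,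
    ∑ x : Fin N → Bool, prefProb2 μ k k x z = 2 ^ (N - k) * prefProb PY k z := by
  intro k
  induction k with
  | zero =>
    intro _ z
    have h1 : ∀ x : Fin N → Bool, prefProb2 μ 0 0 x z = 1 := by
      intro x
      unfold prefProb2
      rw [← hμsum]
      refine Finset.sum_congr rfl fun p _ => ?_
      rw [if_pos ⟨fun i hi => absurd hi (by omega), fun i hi => absurd hi (by omega)⟩]
    have h2 : prefProb PY 0 z = 1 := by
      unfold prefProb
      rw [← hPYsum]
      refine Finset.sum_congr rfl fun w _ => ?_
      rw [if_pos fun i hi => absurd hi (by omega)]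
    simp only [h1, h2, Nat.sub_zero, mul_one, Finset.sum_const, Finset.card_univ]
    rw [Fintype.card_fun]
    simp
  | succ k ih =>
    intro hk z
    have hkN : k < N := hk
    set κ : Fin N := ⟨k, hkN⟩ with hκdef
    have hkey : ∀ x : Fin N → Bool,
        prefProb2 μ (k + 1) (k + 1) (Function.update x κ true) z +
          prefProb2 μ (k + 1) (k + 1) (Function.update x κ false) z =
          prefProb2 μ k k x z *
            (if z κ = true then condProb PY κ z else 1 - condProb PY κ z) :=
      fun x => keyR hPXnn hPYnn hμnn hdom hX hZ κ x z
    have hpair := sum_pair (fun x => prefProb2 μ (k + 1) (k + 1) x z) κ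
    have hfac : prefProb PY (k + 1) z =
        prefProb PY k z * (if z κ = true then condProb PY κ z else 1 - condProb PY κ z) :=
      prefProb_succ_self PY hPYnn κ z
    have hsum : ∑ x : Fin N → Bool,
        (prefProb2 μ (k + 1) (k + 1) (Function.update x κ true) z +
          prefProb2 μ (k + 1) (k + 1) (Function.update x κ false) z) =
        (2 : ℝ) ^ (N - k) * prefProb PY k z *
          (if z κ = true then condProb PY κ z else 1 - condProb PY κ z) := by
      rw [Finset.sum_congr rfl fun x _ => hkey x, ← Finset.sum_mul, ih (le_of_lt hkN) z]
    have hpow : (2 : ℝ) ^ (N - k) = 2 * 2 ^ (N - (k + 1)) := by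
      have : N - k = (N - (k + 1)) + 1 := by omega
      rw [this, pow_succ]
      ring
    rw [hsum, hpow] at hpair
    rw [hfac]
    linarith
end Main

/-- Sequential thinning: if `Y` is dominated by `X` in the sequential conditional sense
and `(X, Z)` is the coupling defined by the sequential thinning conditionals, then
`Z ⊆ X` almost surely and `Z` has the same distribution as `Y`. -/
theorem sequential_thinning {N : ℕ}
    (PX PY : (Fin N → Bool) → ℝ) (μ : ((Fin N → Bool) × (Fin N → Bool)) → ℝ)
    (hPXnn : ∀ x, 0 ≤ PX x) (hPYnn : ∀ y, 0 ≤ PY y) (hμnn : ∀ p, 0 ≤ μ p)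
    (hPXsum : ∑ x, PX x = 1) (hPYsum : ∑ y, PY y = 1) (hμsum : ∑ p, μ p = 1)
    -- domination: whenever `ℙ(Z_{1:k−1} = z_{1:k−1}, X_{1:k−1} = x_{1:k−1}) > 0`,
    -- `ℙ(Y_k = 1 | Y_{1:k−1} = z_{1:k−1}) ≤ ℙ(X_k = 1 | X_{1:k−1} = x_{1:k−1})`
    (hdom : ∀ (k : Fin N) (x z : Fin N → Bool),
      0 < prefProb2 μ (k : ℕ) (k : ℕ) x z → condProb PY k z ≤ condProb PX k x)
    -- the coupling conditional for `X_k`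
    (hX : ∀ (k : Fin N) (x z : Fin N → Bool),
      0 < prefProb2 μ (k : ℕ) (k : ℕ) x z → condProbX μ k x z = condProb PX k x)
    -- the coupling conditional for `Z_k`
    (hZ : ∀ (k : Fin N) (x z : Fin N → Bool),
      0 < prefProb2 μ ((k : ℕ) + 1) (k : ℕ) x z →
        condProbZ μ k x z =
          if x k = true then condProb PY k z / condProb PX k x else 0) :
    (∀ p : (Fin N → Bool) × (Fin N → Bool), 0 < μ p →
        ∀ k : Fin N, p.2 k = true → p.1 k = true) ∧
    (∀ z : Fin N → Bool, ∑ x : Fin N → Bool, μ (x, z) = PY z) := by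
  constructor
  · rintro p hp k hk2
    by_contra hk1
    have hk1' : p.1 k = false := by
      cases h : p.1 k
      · rfl
      · exact absurd h hk1
    have hB : 0 < prefProb2 μ ((k : ℕ) + 1) (k : ℕ) p.1 p.2 := by
      refine lt_of_lt_of_le hp ?_
      unfold prefProb2
      refine le_trans (le_of_eq ?_) (Finset.single_le_sum (fun q _ => ?_) (Finset.mem_univ p))
      · rw [if_pos ⟨fun i _ => rfl, fun i _ => rfl⟩]
      · split <;> simp [hμnn q]
    have h := hZ k p.1 p.2 hB
    rw [if_neg (by simp [hk1'])] at h
    have hpos : 0 < condProbZ μ k p.1 p.2 := by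
      rw [condProbZ]
      apply div_pos _ hB
      refine lt_of_lt_of_le hp ?_
      refine le_trans (le_of_eq ?_) (Finset.single_le_sum (fun q _ => ?_) (Finset.mem_univ p))
      · rw [if_pos ⟨fun i _ => rfl, fun i _ => rfl, hk2⟩]
      · split <;> simp [hμnn q]
    rw [h] at hpos
    exact lt_irrefl 0 hpos
  · intro z
    have hm := marginal hPXnn hPYnn hμnn hPYsum hμsum hdom hX hZ N le_rfl z
    rw [prefProb_top] at hm
    rw [Finset.sum_congr rfl fun x _ => prefProb2_top μ x z] at hm
    simpa using hm
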